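/- The spectrum of M contains the Lagrange multiplier of every KKT point of the trust-region subproblem (T): if x ∈ ℝⁿ and μ ∈ ℝ satisfy Px + q + μx = 0 and ‖x‖₂ = r, then μ is an eigenvalue of M. -/
import Mathlib


open Matrix Complex
open scoped Classical

noncomputable section

/-- Euclidean norm of a vector in `ℝⁿ`. -/
def euclNorm {n : ℕ} (x : Fin n → ℝ) : ℝ := Real.sqrt (x ⬝ᵥ x)

/-- The quadratic objective `f(x) = ½ xᵀPx + qᵀx`. -/
def qobj {n : ℕ} (P : Matrix (Fin n) (Fin n) ℝ) (q : Fin n → ℝ) (x : Fin n → ℝ) : ℝ :=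
  (1 / 2) * (x ⬝ᵥ P.mulVec x) + q ⬝ᵥ x

/-- The block matrix `M = [[-P, qqᵀ/r²], [I, -P]]`. -/
def trsM {n : ℕ} (P : Matrix (Fin n) (Fin n) ℝ) (q : Fin n → ℝ) (r : ℝ) :
    Matrix (Fin n ⊕ Fin n) (Fin n ⊕ Fin n) ℝ :=
  Matrix.fromBlocks (-P) ((r ^ 2)⁻¹ • Matrix.vecMulVec q q) 1 (-P)

/-- The complexification of `M`. -/
def trsMC {n : ℕ} (P : Matrix (Fin n) (Fin n) ℝ) (q : Fin n → ℝ) (r : ℝ) :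
    Matrix (Fin n ⊕ Fin n) (Fin n ⊕ Fin n) ℂ :=
  (trsM P q r).map Complex.ofReal

/-- `μ ∈ ℂ` is an eigenvalue of the complex matrix `A`. -/
def IsEig {m : Type*} [Fintype m] (A : Matrix m m ℂ) (μ : ℂ) : Prop :=
  ∃ v : m → ℂ, v ≠ 0 ∧ A.mulVec v = μ • v

/-- The secular function `s(z) = Σᵢ (wᵢᵀq)²/(λᵢ + z)² - r²` on `ℂ`. -/
def secular {n : ℕ} (lam : Fin n → ℝ) (w : Fin n → Fin n → ℝ) (q : Fin n → ℝ) (r : ℝ)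
    (z : ℂ) : ℂ :=
  (∑ i, ((w i ⬝ᵥ q : ℝ) : ℂ) ^ 2 / (((lam i : ℝ) : ℂ) + z) ^ 2) - (r : ℂ) ^ 2

/-- The secular function on `ℝ`. -/
def secularR {n : ℕ} (lam : Fin n → ℝ) (w : Fin n → Fin n → ℝ) (q : Fin n → ℝ) (r : ℝ)
    (t : ℝ) : ℝ :=
  (∑ i, (w i ⬝ᵥ q) ^ 2 / (lam i + t) ^ 2) - r ^ 2

/-- The derivative of the secular function, `s'(t) = -2 Σᵢ (wᵢᵀq)²/(λᵢ + t)³`. -/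
def secularDeriv {n : ℕ} (lam : Fin n → ℝ) (w : Fin n → Fin n → ℝ) (q : Fin n → ℝ)
    (t : ℝ) : ℝ :=
  -2 * ∑ i, (w i ⬝ᵥ q) ^ 2 / (lam i + t) ^ 3

/-- `z` is not a pole of the secular function (the poles are the `-λᵢ` with `wᵢᵀq ≠ 0`). -/
def IsNonpole {n : ℕ} (lam : Fin n → ℝ) (w : Fin n → Fin n → ℝ) (q : Fin n → ℝ) (z : ℂ) : Prop :=
  ∀ i, w i ⬝ᵥ q ≠ 0 → z ≠ -((lam i : ℝ) : ℂ)

/-- `f` has a zero of order exactly `k` at `z`. -/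
def HasZeroOfOrder (f : ℂ → ℂ) (z : ℂ) (k : ℕ) : Prop :=
  ∃ g : ℂ → ℂ, AnalyticAt ℂ g z ∧ g z ≠ 0 ∧ ∀ᶠ u in nhds z, f u = (u - z) ^ k * g u

end

lemma vecMulVec_mulVec' {n : ℕ} (q b : Fin n → ℝ) :
    (Matrix.vecMulVec q q).mulVec b = (q ⬝ᵥ b) • q := by
  ext i
  simp [Matrix.mulVec, Matrix.vecMulVec_apply, dotProduct, Finset.mul_sum, mul_comm,
    mul_left_comm]

lemma real_eig_to_complex {n : ℕ} (P : Matrix (Fin n) (Fin n) ℝ) (q : Fin n → ℝ) (r : ℝ)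
    (μ : ℝ) (v : (Fin n ⊕ Fin n) → ℝ) (hv : v ≠ 0)
    (h : (trsM P q r).mulVec v = μ • v) : IsEig (trsMC P q r) (μ : ℂ) := by
  refine ⟨fun i => (v i : ℂ), ?_, ?_⟩
  · intro hc
    apply hv
    ext i
    have := congrFun hc i
    simpa using this
  · ext i
    have := (RingHom.map_mulVec Complex.ofRealHom (trsM P q r) v i).symm
    simp only [Complex.ofRealHom_eq_coe] at this
    calc (trsMC P q r).mulVec (fun i => (v i : ℂ)) i
        = ((trsM P q r).mulVec v i : ℂ) := by rw [trsMC]; exact this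
      _ = ((μ • v) i : ℂ) := by rw [h]
      _ = ((μ : ℂ) • fun i => (v i : ℂ)) i := by simp

theorem stmt_2 {n : ℕ} (hn : 1 < n)
    (P : Matrix (Fin n) (Fin n) ℝ) (hP : P.IsSymm)
    (q : Fin n → ℝ) (r : ℝ) (hr : 0 < r)
    (x : Fin n → ℝ) (μ : ℝ)
    (hKKT : P.mulVec x + q + μ • x = 0)
    (hx : euclNorm x = r) :
    IsEig (trsMC P q r) (μ : ℂ) := by
  have hq : q = -(P.mulVec x + μ • x) := by
    have := hKKT
    ext i; have := congrFun hKKT i; simp at this ⊢; linarith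
  have hxx : x ⬝ᵥ x = r ^ 2 := by
    have h1 : 0 ≤ x ⬝ᵥ x := by
      simp only [dotProduct]
      exact Finset.sum_nonneg fun i _ => mul_self_nonneg _
    have := hx
    rw [euclNorm] at this
    nlinarith [Real.sq_sqrt h1, this]
  have hx0 : x ≠ 0 := by
    intro h
    rw [h] at hxx
    simp at hxx
    nlinarith
  -- symmetry transfer
  have hsym : ∀ a b : Fin n → ℝ, P.mulVec a ⬝ᵥ b = a ⬝ᵥ P.mulVec b := by
    intro a b
    rw [Matrix.dotProduct_mulVec, ← Matrix.mulVec_transpose, hP.eq, dotProduct_comm]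
  by_cases hdet : (P + μ • 1).det = 0
  · -- kernel case
    obtain ⟨b, hb0, hb⟩ := (Matrix.exists_mulVec_eq_zero_iff).2 hdet
    have hPb : P.mulVec b = -(μ • b) := by
      have := hb
      rw [Matrix.add_mulVec, Matrix.smul_mulVec, Matrix.one_mulVec] at this
      ext i; have := congrFun this i; simp at this ⊢; linarith
    have hqb : q ⬝ᵥ b = 0 := by
      rw [hq]
      have : (P.mulVec x + μ • x) ⬝ᵥ b = x ⬝ᵥ (P.mulVec b + μ • b) := by
        rw [add_dotProduct, dotProduct_add, hsym]
        simp [smul_dotProduct, dotProduct_smul, dotProduct_comm x b]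
      rw [neg_dotProduct, this, hPb]
      simp
    refine real_eig_to_complex P q r μ (Sum.elim 0 b) ?_ ?_
    · intro hc
      apply hb0
      ext i; have := congrFun hc (Sum.inr i); simpa using this
    · rw [trsM, Matrix.fromBlocks_mulVec]
      simp only [Sum.elim_comp_inl, Sum.elim_comp_inr]
      ext (i | i)
      · simp [Matrix.smul_mulVec, vecMulVec_mulVec', hqb]
      · simp [Matrix.neg_mulVec, hPb]
  · -- invertible case
    have hinv := Matrix.invertibleOfIsUnitDet (P + μ • 1) (isUnit_iff_ne_zero.2 hdet)
    set b := (P + μ • 1)⁻¹.mulVec x with hbdef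
    have hb : (P + μ • 1).mulVec b = x := by
      rw [hbdef, Matrix.mulVec_mulVec, Matrix.mul_nonsing_inv _ (isUnit_iff_ne_zero.2 hdet),
        Matrix.one_mulVec]
    have hPb : P.mulVec b = x - μ • b := by
      rw [Matrix.add_mulVec, Matrix.smul_mulVec, Matrix.one_mulVec] at hb
      ext i; have := congrFun hb i; simp at this ⊢; linarith
    have hqb : q ⬝ᵥ b = -r ^ 2 := by
      rw [hq]
      have h1 : (P.mulVec x + μ • x) ⬝ᵥ b = x ⬝ᵥ (P.mulVec b + μ • b) := by
        rw [add_dotProduct, dotProduct_add, hsym]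
        simp [smul_dotProduct, dotProduct_smul, dotProduct_comm x b]
      rw [neg_dotProduct, h1, hPb]
      simp [hxx]
    refine real_eig_to_complex P q r μ (Sum.elim x b) ?_ ?_
    · intro hc
      apply hx0
      ext i; have := congrFun hc (Sum.inl i); simpa using this
    · rw [trsM, Matrix.fromBlocks_mulVec]
      have hPx : P.mulVec x = -q - μ • x := by
        ext i; have := congrFun hKKT i; simp at this ⊢; linarith
      have hr0 : r ≠ 0 := ne_of_gt hr
      simp only [Sum.elim_comp_inl, Sum.elim_comp_inr]
      ext (i | i)
      · simp only [Sum.elim_inl, Matrix.neg_mulVec, hPx, Matrix.smul_mulVec,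
          vecMulVec_mulVec', hqb, Pi.smul_apply, Pi.add_apply, Pi.neg_apply, Pi.sub_apply,
          smul_eq_mul]
        field_simp
        ring
      · simp only [Sum.elim_inr, Matrix.neg_mulVec, Pi.neg_apply, hPb, Pi.sub_apply,
          Pi.smul_apply, Pi.add_apply, smul_eq_mul, Matrix.one_mulVec]
        ring
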